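/- arXiv:2603.26540 — 2 statements merged into one kernel-verified Lean document; each statement's English description precedes it below -/
import Mathlib

section
/- Let ρ_A = ⊕_k p_k ρ̃_k and σ_A = ⊕_k q_k σ̃_k be block-diagonal density matrices, where (p_k), (q_k) are probability distributions and ρ̃_k, σ̃_k are density matrices on the k-th block. Define D = ½‖ρ_A − σ_A‖₁, D_prob = ½ Σ_k |p_k − q_k|, and D_conf = ½ Σ_k q_k ‖ρ̃_k − σ̃_k‖₁. Then D_prob ≤ D ≤ D_prob + D_conf. -/
open Matrix Finset
open scoped ComplexOrder
open scoped MatrixOrder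

/-- Trace norm (Schatten 1-norm) of a complex matrix: `‖A‖₁ = Tr √(Aᴴ A)`. -/
noncomputable def traceNorm {n : Type*} [Fintype n] [DecidableEq n] (A : Matrix n n ℂ) : ℝ :=
  (((Matrix.posSemidef_conjTranspose_mul_self A).1.eigenvectorUnitary : Matrix n n ℂ) *
      diagonal ((RCLike.ofReal : ℝ → ℂ) ∘ (Real.sqrt ·) ∘
        (Matrix.posSemidef_conjTranspose_mul_self A).1.eigenvalues) *
      (star (Matrix.posSemidef_conjTranspose_mul_self A).1.eigenvectorUnitary : Matrix n n ℂ)).trace.re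

section Aux

variable {n : Type*} [Fintype n] [DecidableEq n]

lemma traceNorm_eq_cfcSqrt (A : Matrix n n ℂ) :
    traceNorm A = (CFC.sqrt (Aᴴ * A)).trace.re := by
  have hX := Matrix.posSemidef_conjTranspose_mul_self A
  rw [CFC.sqrt_eq_cfc, cfc_nnreal_eq_real _ _ hX.nonneg, hX.1.cfc_eq, IsHermitian.cfc,
    Unitary.conjStarAlgAut_apply]
  have hf : ∀ x : ℝ, ((NNReal.sqrt x.toNNReal : NNReal) : ℝ) = Real.sqrt x :=
    fun x => by rw [Real.sqrt]
  simp only [traceNorm, hf]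

/-- If `B` is PSD and `B ^ 2 = Aᴴ * A` then `traceNorm A = Re (Tr B)`. -/
lemma traceNorm_eq_of_sq {A B : Matrix n n ℂ} (hB : B.PosSemidef)
    (h : B ^ 2 = Aᴴ * A) : traceNorm A = B.trace.re := by
  rw [traceNorm_eq_cfcSqrt, (CFC.sqrt_eq_iff _ _ (Matrix.posSemidef_conjTranspose_mul_self A).nonneg
    hB.nonneg).mpr (by rw [← pow_two, h])]

lemma isHermitian_real_smul {A : Matrix n n ℂ} (hA : A.IsHermitian) (c : ℝ) :
    (c • A).IsHermitian := by
  unfold Matrix.IsHermitian at *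
  rw [Matrix.conjTranspose_smul, star_trivial, hA]

lemma posSemidef_real_smul {A : Matrix n n ℂ} (hA : A.PosSemidef) {c : ℝ} (hc : 0 ≤ c) :
    (c • A).PosSemidef := by
  refine ⟨isHermitian_real_smul hA.1 c, fun x => ?_⟩
  exact (hA.smul hc).2 x

lemma conj_sandwich_mul {U D E : Matrix n n ℂ} (hUU : Uᴴ * U = 1) :
    (U * D * Uᴴ) * (U * E * Uᴴ) = U * (D * E) * Uᴴ := by
  simp only [Matrix.mul_assoc]
  rw [← Matrix.mul_assoc Uᴴ U (E * Uᴴ), hUU, Matrix.one_mul]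

/-- The trace norm of a Hermitian matrix is the sum of absolute values of eigenvalues. -/
lemma traceNorm_hermitian_eq {A : Matrix n n ℂ} (hA : A.IsHermitian) :
    traceNorm A = ∑ i, |hA.eigenvalues i| := by
  set U : Matrix n n ℂ := (hA.eigenvectorUnitary : Matrix n n ℂ) with hUdef
  have hUU : Uᴴ * U = 1 := by
    rw [← Matrix.star_eq_conjTranspose]
    exact Matrix.mem_unitaryGroup_iff'.mp hA.eigenvectorUnitary.2
  set d : n → ℂ := fun i => ((|hA.eigenvalues i| : ℝ) : ℂ) with hddef
  have hd : 0 ≤ d := fun i => Complex.zero_le_real.2 (abs_nonneg _)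
  set B : Matrix n n ℂ := U * Matrix.diagonal d * Uᴴ with hBdef
  have hBpsd : B.PosSemidef := (Matrix.PosSemidef.diagonal hd).mul_mul_conjTranspose_same U
  have hAeq : A = U * Matrix.diagonal (Complex.ofReal ∘ hA.eigenvalues) * Uᴴ := by
    rw [← Matrix.star_eq_conjTranspose]; exact hA.spectral_theorem
  have hsq : B ^ 2 = Aᴴ * A := by
    rw [pow_two, hBdef, conj_sandwich_mul hUU, Matrix.diagonal_mul_diagonal]
    rw [hA.eq, hAeq, conj_sandwich_mul hUU, Matrix.diagonal_mul_diagonal]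
    congr 1
    funext i
    simp only [hddef, Pi.mul_apply, Function.comp_apply, ← Complex.ofReal_mul,
      abs_mul_abs_self]
  rw [traceNorm_eq_of_sq hBpsd hsq, hBdef, Matrix.trace_mul_cycle, hUU, Matrix.one_mul,
    Matrix.trace_diagonal]
  simp [hddef]

lemma trace_eq_sum_eigen {A : Matrix n n ℂ} (hA : A.IsHermitian) :
    A.trace = ∑ i, (hA.eigenvalues i : ℂ) := by
  have hUU : (hA.eigenvectorUnitary : Matrix n n ℂ) * star (hA.eigenvectorUnitary : Matrix n n ℂ)
      = 1 := Matrix.mem_unitaryGroup_iff.mp hA.eigenvectorUnitary.2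
  have h := hA.conjStarAlgAut_star_eigenvectorUnitary
  rw [Unitary.conjStarAlgAut_star_apply] at h
  have h2 := congrArg Matrix.trace h
  rw [Matrix.trace_mul_cycle, hUU, Matrix.one_mul, Matrix.trace_diagonal] at h2
  simpa using h2

lemma abs_trace_re_le {A : Matrix n n ℂ} (hA : A.IsHermitian) :
    |A.trace.re| ≤ traceNorm A := by
  rw [trace_eq_sum_eigen hA, traceNorm_hermitian_eq hA]
  have : (∑ i, (hA.eigenvalues i : ℂ)).re = ∑ i, hA.eigenvalues i := by
    push_cast
    simp
  rw [this]
  exact Finset.abs_sum_le_sum_abs _ _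

/-- For a Hermitian `A` and any unitary `U`, the sum of absolute values of the diagonal
entries of `star U * A * U` is at most the trace norm of `A`. -/
lemma sum_abs_diag_le {A : Matrix n n ℂ} (hA : A.IsHermitian)
    {U : Matrix n n ℂ} (hU : U ∈ Matrix.unitaryGroup n ℂ) :
    ∑ i, ‖(star U * A * U) i i‖ ≤ traceNorm A := by
  set V : Matrix n n ℂ := (hA.eigenvectorUnitary : Matrix n n ℂ) with hVdef
  have hV : V ∈ Matrix.unitaryGroup n ℂ := hA.eigenvectorUnitary.2
  set W : Matrix n n ℂ := Vᴴ * U with hWdef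
  have hWmem : W ∈ Matrix.unitaryGroup n ℂ := by
    rw [hWdef, ← Matrix.star_eq_conjTranspose]
    exact mul_mem (Unitary.star_mem hV) hU
  have hrow : ∀ j, ∑ i, Complex.normSq (W j i) = 1 := by
    intro j
    have h1 : W * Wᴴ = 1 := by
      rw [← Matrix.star_eq_conjTranspose]
      exact Matrix.mem_unitaryGroup_iff.mp hWmem
    have h2 := congrArg (fun M => M j j) h1
    simp only [Matrix.mul_apply, Matrix.conjTranspose_apply, Matrix.one_apply_eq] at h2
    have h3 : (∑ i, (Complex.normSq (W j i) : ℂ)) = 1 := by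
      rw [← h2]
      refine Finset.sum_congr rfl fun i _ => ?_
      rw [← Complex.mul_conj]
      rfl
    have h4 := congrArg Complex.re h3
    push_cast at h4
    simpa using h4
  have hAeq : A = V * Matrix.diagonal (Complex.ofReal ∘ hA.eigenvalues) * Vᴴ := by
    rw [← Matrix.star_eq_conjTranspose]; exact hA.spectral_theorem
  have hentry : ∀ i, (star U * A * U) i i
      = ∑ j, (hA.eigenvalues j : ℂ) * (Complex.normSq (W j i) : ℂ) := by
    intro i
    have hrw : star U * A * U = Wᴴ * Matrix.diagonal (Complex.ofReal ∘ hA.eigenvalues) * W := by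
      rw [Matrix.star_eq_conjTranspose]
      conv_lhs => rw [hAeq]
      rw [hWdef, Matrix.conjTranspose_mul, Matrix.conjTranspose_conjTranspose]
      simp only [Matrix.mul_assoc]
    rw [hrw, Matrix.mul_apply]
    refine Finset.sum_congr rfl fun j _ => ?_
    rw [Matrix.mul_diagonal, Matrix.conjTranspose_apply]
    rw [← Complex.mul_conj]
    simp only [Function.comp_apply, Complex.star_def]
    ring
  calc ∑ i, ‖(star U * A * U) i i‖
      = ∑ i, ‖∑ j, (hA.eigenvalues j : ℂ) * (Complex.normSq (W j i) : ℂ)‖ := by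
        refine Finset.sum_congr rfl fun i _ => ?_
        rw [hentry i]
    _ ≤ ∑ i, ∑ j, ‖(hA.eigenvalues j : ℂ) * (Complex.normSq (W j i) : ℂ)‖ := by
        refine Finset.sum_le_sum fun i _ => ?_
        exact norm_sum_le _ _
    _ = ∑ j, ∑ i, |hA.eigenvalues j| * Complex.normSq (W j i) := by
        rw [Finset.sum_comm]
        refine Finset.sum_congr rfl fun j _ => Finset.sum_congr rfl fun i _ => ?_
        rw [norm_mul, Complex.norm_real, Complex.norm_real, Real.norm_eq_abs, Real.norm_eq_abs,
          abs_of_nonneg (Complex.normSq_nonneg _)]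
    _ = ∑ j, |hA.eigenvalues j| := by
        refine Finset.sum_congr rfl fun j _ => ?_
        rw [← Finset.mul_sum, hrow j, mul_one]
    _ = traceNorm A := (traceNorm_hermitian_eq hA).symm

/-- Triangle inequality for the trace norm of Hermitian matrices. -/
lemma traceNorm_add_le {A B : Matrix n n ℂ} (hA : A.IsHermitian) (hB : B.IsHermitian) :
    traceNorm (A + B) ≤ traceNorm A + traceNorm B := by
  have hC : (A + B).IsHermitian := hA.add hB
  set U : Matrix n n ℂ := (hC.eigenvectorUnitary : Matrix n n ℂ) with hUdef
  have hU : U ∈ Matrix.unitaryGroup n ℂ := hC.eigenvectorUnitary.2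
  have hdiag : star U * (A + B) * U
      = Matrix.diagonal (Complex.ofReal ∘ hC.eigenvalues) := by
    have h := hC.conjStarAlgAut_star_eigenvectorUnitary
    rw [Unitary.conjStarAlgAut_star_apply] at h
    exact h
  have h1 : traceNorm (A + B) = ∑ i, ‖(star U * (A + B) * U) i i‖ := by
    rw [traceNorm_hermitian_eq hC, hdiag]
    refine Finset.sum_congr rfl fun i _ => ?_
    simp [Matrix.diagonal_apply_eq]
  have h2 : ∀ i, (star U * (A + B) * U) i i
      = (star U * A * U) i i + (star U * B * U) i i := by
    intro i
    rw [Matrix.mul_add, Matrix.add_mul]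
    rfl
  calc traceNorm (A + B) = ∑ i, ‖(star U * (A + B) * U) i i‖ := h1
    _ ≤ ∑ i, (‖(star U * A * U) i i‖ + ‖(star U * B * U) i i‖) := by
        refine Finset.sum_le_sum fun i _ => ?_
        rw [h2 i]
        exact norm_add_le _ _
    _ = (∑ i, ‖(star U * A * U) i i‖)
        + ∑ i, ‖(star U * B * U) i i‖ := Finset.sum_add_distrib
    _ ≤ traceNorm A + traceNorm B :=
        add_le_add (sum_abs_diag_le hA hU) (sum_abs_diag_le hB hU)

lemma traceNorm_posSemidef {A : Matrix n n ℂ} (hA : A.PosSemidef) :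
    traceNorm A = A.trace.re :=
  traceNorm_eq_of_sq hA (by rw [hA.1, pow_two])

lemma traceNorm_real_smul {A : Matrix n n ℂ} (c : ℝ) :
    traceNorm (c • A) = |c| * traceNorm A := by
  set S := CFC.sqrt (Aᴴ * A) with hSdef
  have hS : S.PosSemidef := Matrix.nonneg_iff_posSemidef.mp (CFC.sqrt_nonneg _)
  have hB : (|c| • S).PosSemidef := posSemidef_real_smul hS (abs_nonneg c)
  have hsq : (|c| • S) ^ 2 = (c • A)ᴴ * (c • A) := by
    rw [Matrix.conjTranspose_smul, star_trivial, Matrix.smul_mul, Matrix.mul_smul,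
      smul_smul, smul_pow, sq_abs, hSdef, CFC.sq_sqrt _ (Matrix.posSemidef_conjTranspose_mul_self A).nonneg, ← pow_two]
  rw [traceNorm_eq_of_sq hB hsq, Matrix.trace_smul]
  rw [Complex.real_smul, Complex.re_ofReal_mul]
  rw [traceNorm_eq_cfcSqrt]

end Aux

lemma posSemidef_blockDiagonal' {K : Type*} [Fintype K] [DecidableEq K] {ι : K → Type*}
    [∀ k, Fintype (ι k)] [∀ k, DecidableEq (ι k)] {M : ∀ k, Matrix (ι k) (ι k) ℂ}
    (hM : ∀ k, (M k).PosSemidef) : (Matrix.blockDiagonal' M).PosSemidef := by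
  choose C hC using fun k => CStarAlgebra.nonneg_iff_eq_star_mul_self.mp (hM k).nonneg
  rw [show M = fun k => (C k)ᴴ * C k from funext hC, Matrix.blockDiagonal'_mul,
    ← Matrix.blockDiagonal'_conjTranspose]
  exact Matrix.posSemidef_conjTranspose_mul_self _

lemma traceNorm_blockDiagonal' {K : Type*} [Fintype K] [DecidableEq K] {ι : K → Type*}
    [∀ k, Fintype (ι k)] [∀ k, DecidableEq (ι k)] (M : ∀ k, Matrix (ι k) (ι k) ℂ) :
    traceNorm (Matrix.blockDiagonal' M) = ∑ k, traceNorm (M k) := by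
  set S := fun k => CFC.sqrt ((M k)ᴴ * M k) with hSdef
  have hS : ∀ k, (S k).PosSemidef :=
    fun k => Matrix.nonneg_iff_posSemidef.mp (CFC.sqrt_nonneg _)
  have hB : (Matrix.blockDiagonal' S).PosSemidef := posSemidef_blockDiagonal' hS
  have hsq : (Matrix.blockDiagonal' S) ^ 2
      = (Matrix.blockDiagonal' M)ᴴ * Matrix.blockDiagonal' M := by
    rw [pow_two, ← Matrix.blockDiagonal'_mul, Matrix.blockDiagonal'_conjTranspose,
      ← Matrix.blockDiagonal'_mul]
    refine congrArg _ (funext fun k => ?_)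
    show CFC.sqrt ((M k)ᴴ * M k) * CFC.sqrt ((M k)ᴴ * M k) = _
    rw [CFC.sqrt_mul_sqrt_self _ (Matrix.posSemidef_conjTranspose_mul_self (M k)).nonneg]
  rw [traceNorm_eq_of_sq hB hsq, Matrix.trace_blockDiagonal', Complex.re_sum]
  simp only [traceNorm_eq_cfcSqrt, hSdef]

/-- Proposition 1: for block-diagonal density matrices `ρ_A = ⊕ₖ pₖ ρ̃ₖ` and
`σ_A = ⊕ₖ qₖ σ̃ₖ`, the trace distance `D = ½‖ρ_A − σ_A‖₁` satisfies
`D_prob ≤ D ≤ D_prob + D_conf` with `D_prob = ½ Σₖ |pₖ − qₖ|` and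
`D_conf = ½ Σₖ qₖ ‖ρ̃ₖ − σ̃ₖ‖₁`. -/
theorem traceDist_prob_conf_bounds {K : Type*} [Fintype K] [DecidableEq K]
    {ι : K → Type*} [∀ k, Fintype (ι k)] [∀ k, DecidableEq (ι k)]
    (p q : K → ℝ) (ρt σt : ∀ k, Matrix (ι k) (ι k) ℂ)
    (hp : ∀ k, 0 ≤ p k) (hq : ∀ k, 0 ≤ q k)
    (hp1 : ∑ k, p k = 1) (hq1 : ∑ k, q k = 1)
    (hρ : ∀ k, (ρt k).PosSemidef ∧ (ρt k).trace = 1)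
    (hσ : ∀ k, (σt k).PosSemidef ∧ (σt k).trace = 1) :
    (1 / 2) * ∑ k, |p k - q k| ≤
      (1 / 2) * traceNorm (Matrix.blockDiagonal' (fun k => p k • ρt k) -
        Matrix.blockDiagonal' (fun k => q k • σt k)) ∧
    (1 / 2) * traceNorm (Matrix.blockDiagonal' (fun k => p k • ρt k) -
        Matrix.blockDiagonal' (fun k => q k • σt k)) ≤
      (1 / 2) * ∑ k, |p k - q k| + (1 / 2) * ∑ k, q k * traceNorm (ρt k - σt k) := by
  set M : ∀ k, Matrix (ι k) (ι k) ℂ := fun k => p k • ρt k - q k • σt k with hMdef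
  have hMherm : ∀ k, (M k).IsHermitian :=
    fun k => (isHermitian_real_smul (hρ k).1.1 (p k)).sub (isHermitian_real_smul (hσ k).1.1 (q k))
  have hkey : traceNorm (Matrix.blockDiagonal' (fun k => p k • ρt k) -
      Matrix.blockDiagonal' (fun k => q k • σt k)) = ∑ k, traceNorm (M k) := by
    rw [← Matrix.blockDiagonal'_sub, traceNorm_blockDiagonal']
    rfl
  have htrM : ∀ k, (M k).trace.re = p k - q k := by
    intro k
    rw [hMdef]
    simp only [Matrix.trace_sub, Matrix.trace_smul, (hρ k).2, (hσ k).2]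
    simp [Complex.real_smul]
  constructor
  · rw [hkey]
    have hle : ∑ k, |p k - q k| ≤ ∑ k, traceNorm (M k) := by
      refine Finset.sum_le_sum fun k _ => ?_
      have := abs_trace_re_le (hMherm k)
      rwa [htrM k] at this
    linarith
  · rw [hkey]
    have hle : ∑ k, traceNorm (M k)
        ≤ ∑ k, (|p k - q k| + q k * traceNorm (ρt k - σt k)) := by
      refine Finset.sum_le_sum fun k _ => ?_
      have hdecomp : M k = (p k - q k) • ρt k + q k • (ρt k - σt k) := by
        rw [hMdef]
        module
      calc traceNorm (M k)
          ≤ traceNorm ((p k - q k) • ρt k) + traceNorm (q k • (ρt k - σt k)) := by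
            rw [hdecomp]
            exact traceNorm_add_le (isHermitian_real_smul (hρ k).1.1 _)
              (isHermitian_real_smul ((hρ k).1.1.sub (hσ k).1.1) _)
        _ = |p k - q k| + q k * traceNorm (ρt k - σt k) := by
            rw [traceNorm_real_smul, traceNorm_real_smul,
              traceNorm_posSemidef (hρ k).1, (hρ k).2, abs_of_nonneg (hq k)]
            simp
    calc (1 / 2) * ∑ k, traceNorm (M k)
        ≤ (1 / 2) * ∑ k, (|p k - q k| + q k * traceNorm (ρt k - σt k)) := by linarith
      _ = (1 / 2) * ∑ k, |p k - q k| + (1 / 2) * ∑ k, q k * traceNorm (ρt k - σt k) := by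
          rw [Finset.sum_add_distrib, mul_add]
end

section
/- Combined exponential suppression bound: with the hypotheses of the previous two statements (P_k^{(α)} = T_k + ε Δ_k^{(α)}, m eigenstates, n sectors), the pair-averaged probability trace distance satisfies ⟨D_prob⟩ ≤ (m/(m−1)) · ε · √(n Σ_k Var(Δ_k^{(·)})). In particular, if ε = e^{−c·N} for some c > 0 and n Σ_k Var(Δ_k) grows at most polynomially in N, then ⟨D_prob⟩ → 0 exponentially as N → ∞. -/
open Finset Filter

private lemma sum_abs_le_sqrt {ι : Type*} (s : Finset ι) (f : ι → ℝ) :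
    ∑ i ∈ s, |f i| ≤ Real.sqrt s.card * Real.sqrt (∑ i ∈ s, f i ^ 2) := by
  rw [← Real.sqrt_mul (Nat.cast_nonneg _)]
  refine Real.le_sqrt_of_sq_le ?_
  calc (∑ i ∈ s, |f i|) ^ 2 ≤ (s.card : ℝ) * ∑ i ∈ s, |f i| ^ 2 :=
        sq_sum_le_card_mul_sum_sq
    _ = (s.card : ℝ) * ∑ i ∈ s, f i ^ 2 := by simp [sq_abs]

/-- Combined exponential suppression bound (main quantitative conclusion of
Proposition 2 under the non-Abelian ETH).  For each system size `N` the window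
contains `m N` eigenstates and `n N` sectors, the sector probabilities decompose
as `P = T + ε Δ` with `ε N = e^{−cN}`, and `n Σₖ Var(Δₖ)` grows at most
polynomially.  Then the pair-averaged probability trace distance obeys
`⟨D_prob⟩ ≤ (m/(m−1)) ε √(n Σₖ Var Δₖ)` and decays to zero exponentially. -/
theorem prob_trace_distance_exponential_suppression
    (m n : ℕ → ℕ) (hm : ∀ N, 2 ≤ m N)
    (P T Δ : (N : ℕ) → ℕ → Fin (n N) → ℝ)
    (hT : ∀ N, ∀ α ∈ Finset.range (m N), ∀ β ∈ Finset.range (m N), ∀ k,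
      T N α k = T N β k)
    (c : ℝ) (hc : 0 < c)
    (hdec : ∀ N, ∀ α ∈ Finset.range (m N), ∀ k,
      P N α k = T N α k + Real.exp (-c * N) * Δ N α k)
    (VarΔ : (N : ℕ) → Fin (n N) → ℝ)
    (hVar : ∀ N k, VarΔ N k = (1 / (m N : ℝ)) * ∑ α ∈ Finset.range (m N),
      (Δ N α k - (1 / (m N : ℝ)) * ∑ β ∈ Finset.range (m N), Δ N β k) ^ 2)
    (C d : ℝ) (hC : 0 < C) (hd : 0 ≤ d)
    (hpoly : ∀ N : ℕ, (n N : ℝ) * ∑ k, VarΔ N k ≤ C * (N : ℝ) ^ d)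
    (Dprob : ℕ → ℝ)
    (hD : ∀ N, Dprob N = (1 / ((m N : ℝ) - 1)) * ∑ α ∈ Finset.range (m N - 1),
      ((1 / 2) * ∑ k, |P N (α + 1) k - P N α k|)) :
    (∀ N, Dprob N ≤ ((m N : ℝ) / ((m N : ℝ) - 1)) * Real.exp (-c * N) *
        Real.sqrt ((n N : ℝ) * ∑ k, VarΔ N k)) ∧
    Tendsto Dprob atTop (nhds 0) ∧
    ∃ c' > 0, ∀ᶠ N : ℕ in atTop, Dprob N ≤ Real.exp (-c' * N) := by
  -- nonnegativity of Dprob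
  have hDnn : ∀ N, 0 ≤ Dprob N := by
    intro N
    rw [hD N]
    have h1 : (0:ℝ) ≤ 1 / ((m N : ℝ) - 1) := by
      have h2 : (2:ℝ) ≤ (m N : ℝ) := by exact_mod_cast hm N
      exact div_nonneg zero_le_one (by linarith)
    refine mul_nonneg h1 (Finset.sum_nonneg fun α _ => ?_)
    positivity
  have key : ∀ N, Dprob N ≤ ((m N : ℝ) / ((m N : ℝ) - 1)) * Real.exp (-c * N) *
      Real.sqrt ((n N : ℝ) * ∑ k, VarΔ N k) := by
    intro N
    set M := m N with hM
    have hM2 : (2:ℝ) ≤ (M : ℝ) := by exact_mod_cast hm N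
    have hM1 : (0:ℝ) < (M : ℝ) - 1 := by linarith
    have hM0 : (0:ℝ) < (M : ℝ) := by linarith
    set ε := Real.exp (-c * N) with hε
    have hεpos : 0 < ε := Real.exp_pos _
    set μ : Fin (n N) → ℝ := fun k => (1 / (M : ℝ)) * ∑ β ∈ Finset.range M, Δ N β k with hμ
    set a : ℕ → ℝ := fun α => Real.sqrt (∑ k, (Δ N α k - μ k) ^ 2) with ha
    have hann : ∀ α, 0 ≤ a α := fun α => Real.sqrt_nonneg _
    have hasq : ∀ α, a α ^ 2 = ∑ k, (Δ N α k - μ k) ^ 2 := fun α =>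
      Real.sq_sqrt (Finset.sum_nonneg fun k _ => sq_nonneg _)
    -- step 1: each term of Dprob bounded
    have step1 : ∀ α ∈ Finset.range (M - 1),
        (1 / 2 : ℝ) * ∑ k, |P N (α + 1) k - P N α k| ≤
        (1 / 2) * ε * Real.sqrt (n N) * (a (α + 1) + a α) := by
      intro α hα
      have hαlt : α < M - 1 := Finset.mem_range.mp hα
      have hα1 : α + 1 ∈ Finset.range M := Finset.mem_range.mpr (by omega)
      have hα0 : α ∈ Finset.range M := Finset.mem_range.mpr (by omega)
      have hdiff : ∀ k, P N (α + 1) k - P N α k = ε * (Δ N (α + 1) k - Δ N α k) := by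
        intro k
        rw [hdec N _ hα1 k, hdec N _ hα0 k, hT N _ hα1 _ hα0 k]
        ring
      have h2 : ∑ k, |P N (α + 1) k - P N α k|
          = ε * ∑ k, |Δ N (α + 1) k - Δ N α k| := by
        rw [Finset.mul_sum]
        refine Finset.sum_congr rfl fun k _ => ?_
        rw [hdiff k, abs_mul, abs_of_pos hεpos]
      rw [h2]
      have h3 : ∑ k, |Δ N (α + 1) k - Δ N α k| ≤ Real.sqrt (n N) * (a (α + 1) + a α) := by
        have htri : ∑ k, |Δ N (α + 1) k - Δ N α k| ≤
            (∑ k, |Δ N (α + 1) k - μ k|) + ∑ k, |Δ N α k - μ k| := by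
          rw [← Finset.sum_add_distrib]
          refine Finset.sum_le_sum fun k _ => ?_
          calc |Δ N (α + 1) k - Δ N α k| ≤ |Δ N (α + 1) k - μ k| + |μ k - Δ N α k| :=
                abs_sub_le _ _ _
            _ = |Δ N (α + 1) k - μ k| + |Δ N α k - μ k| := by rw [abs_sub_comm (μ k)]
        refine htri.trans ?_
        have c1 := sum_abs_le_sqrt (Finset.univ : Finset (Fin (n N)))
          (fun k => Δ N (α + 1) k - μ k)
        have c2 := sum_abs_le_sqrt (Finset.univ : Finset (Fin (n N)))
          (fun k => Δ N α k - μ k)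
        simp only [Finset.card_univ, Fintype.card_fin] at c1 c2
        calc (∑ k, |Δ N (α + 1) k - μ k|) + ∑ k, |Δ N α k - μ k|
            ≤ Real.sqrt (n N) * a (α + 1) + Real.sqrt (n N) * a α := add_le_add c1 c2
          _ = Real.sqrt (n N) * (a (α + 1) + a α) := by ring
      calc (1 / 2 : ℝ) * (ε * ∑ k, |Δ N (α + 1) k - Δ N α k|)
          ≤ (1 / 2) * (ε * (Real.sqrt (n N) * (a (α + 1) + a α))) := by
            have := mul_le_mul_of_nonneg_left h3 hεpos.le
            linarith
        _ = (1 / 2) * ε * Real.sqrt (n N) * (a (α + 1) + a α) := by ring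
    -- step 2: sum of a (α+1) + a α over range (M-1)
    have step2 : ∑ α ∈ Finset.range (M - 1), (a (α + 1) + a α) ≤
        2 * ∑ α ∈ Finset.range M, a α := by
      rw [Finset.sum_add_distrib, two_mul]
      have e1 : ∑ α ∈ Finset.range (M - 1), a (α + 1) ≤ ∑ α ∈ Finset.range M, a α := by
        have : ∑ α ∈ Finset.range (M - 1), a (α + 1) = ∑ α ∈ Finset.Ico 1 M, a α := by
          rw [Finset.sum_Ico_eq_sum_range]
          simp [add_comm]
        rw [this]
        refine Finset.sum_le_sum_of_subset_of_nonneg ?_ (fun α _ _ => hann α)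
        intro x hx
        simp only [Finset.mem_Ico] at hx
        exact Finset.mem_range.mpr hx.2
      have e2 : ∑ α ∈ Finset.range (M - 1), a α ≤ ∑ α ∈ Finset.range M, a α := by
        refine Finset.sum_le_sum_of_subset_of_nonneg ?_ (fun α _ _ => hann α)
        exact Finset.range_subset_range.mpr (by omega)
      exact add_le_add e1 e2
    -- step 3: Cauchy-Schwarz on a
    have step3 : ∑ α ∈ Finset.range M, a α ≤ (M : ℝ) * Real.sqrt (∑ k, VarΔ N k) := by
      have c1 := sum_abs_le_sqrt (Finset.range M) a
      simp only [Finset.card_range] at c1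
      have habs : ∑ α ∈ Finset.range M, |a α| = ∑ α ∈ Finset.range M, a α :=
        Finset.sum_congr rfl fun α _ => abs_of_nonneg (hann α)
      rw [habs] at c1
      have hsum : ∑ α ∈ Finset.range M, a α ^ 2 = (M : ℝ) * ∑ k, VarΔ N k := by
        have : ∑ α ∈ Finset.range M, a α ^ 2
            = ∑ α ∈ Finset.range M, ∑ k, (Δ N α k - μ k) ^ 2 :=
          Finset.sum_congr rfl fun α _ => hasq α
        rw [this, Finset.sum_comm, Finset.mul_sum]
        refine Finset.sum_congr rfl fun k _ => ?_
        rw [hVar N k, ← mul_assoc, mul_one_div, div_self hM0.ne', one_mul]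
      rw [hsum] at c1
      refine c1.trans_eq ?_
      rw [Real.sqrt_mul hM0.le, ← mul_assoc, Real.mul_self_sqrt hM0.le]
    -- combine
    have hVnn : 0 ≤ ∑ k, VarΔ N k := by
      refine Finset.sum_nonneg fun k _ => ?_
      rw [hVar N k]
      positivity
    have hsqrt_split : Real.sqrt (n N) * Real.sqrt (∑ k, VarΔ N k)
        = Real.sqrt ((n N : ℝ) * ∑ k, VarΔ N k) :=
      (Real.sqrt_mul (Nat.cast_nonneg _) _).symm
    rw [hD N]
    calc (1 / ((M : ℝ) - 1)) * ∑ α ∈ Finset.range (M - 1),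
          ((1 / 2) * ∑ k, |P N (α + 1) k - P N α k|)
        ≤ (1 / ((M : ℝ) - 1)) * ∑ α ∈ Finset.range (M - 1),
          ((1 / 2) * ε * Real.sqrt (n N) * (a (α + 1) + a α)) := by
          refine mul_le_mul_of_nonneg_left (Finset.sum_le_sum step1) (by positivity)
      _ = (1 / ((M : ℝ) - 1)) * ((1 / 2) * ε * Real.sqrt (n N) *
          ∑ α ∈ Finset.range (M - 1), (a (α + 1) + a α)) := by
          rw [← Finset.mul_sum]
      _ ≤ (1 / ((M : ℝ) - 1)) * ((1 / 2) * ε * Real.sqrt (n N) *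
          (2 * ((M : ℝ) * Real.sqrt (∑ k, VarΔ N k)))) := by
          refine mul_le_mul_of_nonneg_left ?_ (by positivity)
          refine mul_le_mul_of_nonneg_left ?_ (by positivity)
          calc ∑ α ∈ Finset.range (M - 1), (a (α + 1) + a α)
              ≤ 2 * ∑ α ∈ Finset.range M, a α := step2
            _ ≤ 2 * ((M : ℝ) * Real.sqrt (∑ k, VarΔ N k)) := by
                linarith [step3]
      _ = ((M : ℝ) / ((M : ℝ) - 1)) * ε *
          (Real.sqrt (n N) * Real.sqrt (∑ k, VarΔ N k)) := by ring
      _ = ((M : ℝ) / ((M : ℝ) - 1)) * ε * Real.sqrt ((n N : ℝ) * ∑ k, VarΔ N k) := by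
          rw [hsqrt_split]
  -- auxiliary bound: Dprob N ≤ 2√C · N^(d/2) · exp(-cN)
  have hbound : ∀ N : ℕ, Dprob N ≤
      2 * Real.sqrt C * ((N : ℝ) ^ (d / 2) * Real.exp (-c * N)) := by
    intro N
    refine (key N).trans ?_
    have hM2 : (2:ℝ) ≤ (m N : ℝ) := by exact_mod_cast hm N
    have hfac : (m N : ℝ) / ((m N : ℝ) - 1) ≤ 2 := by
      rw [div_le_iff₀ (by linarith)]
      linarith
    have hs : Real.sqrt ((n N : ℝ) * ∑ k, VarΔ N k) ≤
        Real.sqrt C * (N : ℝ) ^ (d / 2) := by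
      calc Real.sqrt ((n N : ℝ) * ∑ k, VarΔ N k)
          ≤ Real.sqrt (C * (N : ℝ) ^ d) := Real.sqrt_le_sqrt (hpoly N)
        _ = Real.sqrt C * Real.sqrt ((N : ℝ) ^ d) := Real.sqrt_mul hC.le _
        _ = Real.sqrt C * (N : ℝ) ^ (d / 2) := by
            congr 1
            rw [Real.sqrt_eq_rpow, ← Real.rpow_mul (Nat.cast_nonneg _),
              mul_one_div]
    calc ((m N : ℝ) / ((m N : ℝ) - 1)) * Real.exp (-c * N) *
          Real.sqrt ((n N : ℝ) * ∑ k, VarΔ N k)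
        ≤ 2 * Real.exp (-c * N) * (Real.sqrt C * (N : ℝ) ^ (d / 2)) := by
          have he := (Real.exp_pos (-c * (N:ℝ))).le
          have h0 : 0 ≤ Real.sqrt ((n N : ℝ) * ∑ k, VarΔ N k) := Real.sqrt_nonneg _
          have h1 : 0 ≤ (m N : ℝ) / ((m N : ℝ) - 1) :=
            div_nonneg (by linarith) (by linarith)
          gcongr
      _ = 2 * Real.sqrt C * ((N : ℝ) ^ (d / 2) * Real.exp (-c * N)) := by ring
  have hg : ∀ b : ℝ, 0 < b → Tendsto (fun N : ℕ =>
      2 * Real.sqrt C * ((N : ℝ) ^ (d / 2) * Real.exp (-b * N))) atTop (nhds 0) := by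
    intro b hb
    have h1 := (tendsto_rpow_mul_exp_neg_mul_atTop_nhds_zero (d / 2) b hb).comp
      tendsto_natCast_atTop_atTop
    have h2 := h1.const_mul (2 * Real.sqrt C)
    simpa using h2
  refine ⟨key, ?_, ?_⟩
  · exact squeeze_zero hDnn hbound (hg c hc)
  · refine ⟨c / 2, by linarith, ?_⟩
    have hev : ∀ᶠ N : ℕ in atTop,
        2 * Real.sqrt C * ((N : ℝ) ^ (d / 2) * Real.exp (-(c / 2) * N)) < 1 :=
      (hg (c / 2) (by linarith)).eventually_lt_const one_pos
    filter_upwards [hev] with N hN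
    have hexp : Real.exp (-c * N) = Real.exp (-(c / 2) * N) * Real.exp (-(c / 2) * N) := by
      rw [← Real.exp_add]; ring_nf
    have : Dprob N ≤ (2 * Real.sqrt C * ((N : ℝ) ^ (d / 2) * Real.exp (-(c / 2) * N))) *
        Real.exp (-(c / 2) * N) := by
      refine (hbound N).trans_eq ?_
      rw [hexp]; ring
    refine this.trans ?_
    exact mul_le_of_le_one_left (Real.exp_pos _).le hN.le
end
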